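/- arXiv:1001.2283 — 3 statements merged into one kernel-verified Lean document; each statement's English description precedes it below -/
import Mathlib

section
/- Let M ≥ 1, let a < b be extended reals, let Ψ_1, …, Ψ_M, Φ_1, …, Φ_M : (a,b) → ℝ and ξ : (a,b) → ℝ be measurable functions such that each product Ψ_i·Φ_j·ξ is integrable on (a,b) and such that the integrand below is integrable on the ordered domain. Then ∫_{b ≥ x_1 ≥ x_2 ≥ … ≥ x_M ≥ a} det[Ψ_i(x_j)]_{i,j=1}^{M} · det[Φ_i(x_j)]_{i,j=1}^{M} · ∏_{m=1}^{M} ξ(x_m) dx_1…dx_M = det[ ∫_a^b Ψ_i(x) Φ_j(x) ξ(x) dx ]_{i,j=1}^{M}. (Chiani–Win–Zanella / Andréief integration identity.) -/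
open MeasureTheory Matrix Finset

theorem andreief_aux (M : ℕ) (Ψ Φ : Fin M → ℝ → ℝ) (ξ : ℝ → ℝ)
    (S : Set ℝ) (hSm : MeasurableSet S)
    (hint : ∀ i j, IntegrableOn (fun x => Ψ i x * Φ j x * ξ x) S) :
    (∫ x in {x : Fin M → ℝ | (∀ m, x m ∈ S) ∧ Antitone x},
        Matrix.det (Matrix.of fun i j => Ψ i (x j)) *
        Matrix.det (Matrix.of fun i j => Φ i (x j)) * ∏ m, ξ (x m))
    = Matrix.det (Matrix.of fun i j : Fin M => ∫ t in S, Ψ i t * Φ j t * ξ t) := by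
  classical
  set Sπ : Set (Fin M → ℝ) := Set.univ.pi (fun _ => S) with hSπdef
  have hSπm : MeasurableSet Sπ := MeasurableSet.univ_pi fun _ => hSm
  set G : (Fin M → ℝ) → ℝ := fun x =>
    Matrix.det (Matrix.of fun i j => Ψ i (x j)) * ∏ m, (Φ m (x m) * ξ (x m)) with hGdef
  -- indicator integrands for step A
  have hind : ∀ (i j : Fin M),
      Integrable (S.indicator fun t => Ψ i t * Φ j t * ξ t) :=
    fun i j => (integrable_indicator_iff hSm).2 (hint i j)
  have hPint : ∀ σ : Equiv.Perm (Fin M),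
      Integrable (fun x : Fin M → ℝ =>
        ∏ j, S.indicator (fun t => Ψ (σ j) t * Φ j t * ξ t) (x j)) :=
    fun σ => Integrable.fintype_prod (fun j => hind (σ j) j)
  -- the pointwise identity
  have keyA : ∀ x : Fin M → ℝ,
      (∑ σ : Equiv.Perm (Fin M), ((Equiv.Perm.sign σ : ℤ) : ℝ) *
        ∏ j, S.indicator (fun t => Ψ (σ j) t * Φ j t * ξ t) (x j))
      = Sπ.indicator G x := by
    intro x
    by_cases hx : x ∈ Sπ
    · simp only [Set.indicator_of_mem hx, hGdef]
      rw [Matrix.det_apply', Finset.sum_mul]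
      refine Finset.sum_congr rfl fun σ _ => ?_
      rw [mul_assoc]
      congr 1
      rw [← Finset.prod_mul_distrib]
      refine Finset.prod_congr rfl fun j _ => ?_
      rw [Set.indicator_of_mem (hx j (Set.mem_univ j)), Matrix.of_apply, mul_assoc]
    · rw [Set.indicator_of_notMem hx]
      refine Finset.sum_eq_zero fun σ _ => ?_
      obtain ⟨j₀, hj₀⟩ : ∃ j, x j ∉ S := by
        simpa [hSπdef, Set.mem_univ_pi] using hx
      exact mul_eq_zero_of_right _
        (Finset.prod_eq_zero (Finset.mem_univ j₀) (Set.indicator_of_notMem hj₀ _))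
  have hGind : Integrable (Sπ.indicator G) := by
    have h : Sπ.indicator G = fun x => ∑ σ : Equiv.Perm (Fin M), ((Equiv.Perm.sign σ : ℤ) : ℝ) *
        ∏ j, S.indicator (fun t => Ψ (σ j) t * Φ j t * ξ t) (x j) := funext fun x => (keyA x).symm
    rw [h]
    exact integrable_finset_sum _ fun σ _ => (hPint σ).const_mul _
  have hGint : IntegrableOn G Sπ := (integrable_indicator_iff hSπm).1 hGind
  -- Step A
  have stepA : Matrix.det (Matrix.of fun i j : Fin M => ∫ t in S, Ψ i t * Φ j t * ξ t)
      = ∫ x in Sπ, G x := by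
    rw [Matrix.det_apply']
    have h1 : ∀ σ : Equiv.Perm (Fin M),
        (∏ j, (Matrix.of fun i j : Fin M => ∫ t in S, Ψ i t * Φ j t * ξ t) (σ j) j)
        = ∫ x : Fin M → ℝ, ∏ j, S.indicator (fun t => Ψ (σ j) t * Φ j t * ξ t) (x j) := by
      intro σ
      rw [MeasureTheory.volume_pi, MeasureTheory.integral_fintype_prod_eq_prod (ι := Fin M)
        (fun j => S.indicator (fun t => Ψ (σ j) t * Φ j t * ξ t))]
      exact Finset.prod_congr rfl fun j _ => by
        rw [Matrix.of_apply, ← MeasureTheory.integral_indicator hSm]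
    calc (∑ σ : Equiv.Perm (Fin M), ((Equiv.Perm.sign σ : ℤ) : ℝ) *
            ∏ j, (Matrix.of fun i j : Fin M => ∫ t in S, Ψ i t * Φ j t * ξ t) (σ j) j)
        = ∑ σ : Equiv.Perm (Fin M), ∫ x : Fin M → ℝ, ((Equiv.Perm.sign σ : ℤ) : ℝ) *
            ∏ j, S.indicator (fun t => Ψ (σ j) t * Φ j t * ξ t) (x j) := by
          refine Finset.sum_congr rfl fun σ _ => ?_
          rw [h1 σ, MeasureTheory.integral_const_mul]
      _ = ∫ x : Fin M → ℝ, ∑ σ : Equiv.Perm (Fin M), ((Equiv.Perm.sign σ : ℤ) : ℝ) *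
            ∏ j, S.indicator (fun t => Ψ (σ j) t * Φ j t * ξ t) (x j) :=
          (integral_finset_sum _ fun σ _ => (hPint σ).const_mul _).symm
      _ = ∫ x : Fin M → ℝ, Sπ.indicator G x :=
          integral_congr_ae (Filter.Eventually.of_forall fun x => keyA x)
      _ = ∫ x in Sπ, G x := integral_indicator hSπm
  -- null set of non-injective tuples
  have hN : volume {x : Fin M → ℝ | ¬ Function.Injective x} = 0 := by
    have hsub : {x : Fin M → ℝ | ¬ Function.Injective x} ⊆
        ⋃ p ∈ {p : Fin M × Fin M | p.1 ≠ p.2}, {x : Fin M → ℝ | x p.1 = x p.2} := by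
      intro x hx
      obtain ⟨i, j, hij, hne⟩ := Function.not_injective_iff.1 hx
      exact Set.mem_biUnion (show ((i, j) : Fin M × Fin M) ∈ {p : Fin M × Fin M | p.1 ≠ p.2} from hne) hij
    refine measure_mono_null hsub ((measure_biUnion_null_iff (Set.to_countable _)).2 ?_)
    intro p hp
    have hker : {x : Fin M → ℝ | x p.1 = x p.2}
        = (LinearMap.ker ((LinearMap.proj p.1 : (Fin M → ℝ) →ₗ[ℝ] ℝ) - LinearMap.proj p.2) : Set (Fin M → ℝ)) := by
      ext x
      simp [LinearMap.mem_ker, sub_eq_zero]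
    rw [hker]
    refine Measure.addHaar_submodule _ _ (fun htop => ?_)
    have hmem : (Pi.single p.1 (1:ℝ)) ∈
        LinearMap.ker ((LinearMap.proj p.1 : (Fin M → ℝ) →ₗ[ℝ] ℝ) - LinearMap.proj p.2) := by
      rw [htop]; exact Submodule.mem_top
    rw [LinearMap.mem_ker, LinearMap.sub_apply, LinearMap.proj_apply, LinearMap.proj_apply,
      Pi.single_eq_same, Pi.single_eq_of_ne (Ne.symm hp), sub_zero] at hmem
    exact one_ne_zero hmem
  -- chambers
  set C : Equiv.Perm (Fin M) → Set (Fin M → ℝ) := fun σ => {x | StrictAnti (x ∘ σ)} with hCdef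
  have hCm : ∀ σ, MeasurableSet (C σ) := by
    intro σ
    have h : C σ = ⋂ p : Fin M × Fin M, ⋂ _ : p.1 < p.2, {x : Fin M → ℝ | x (σ p.2) < x (σ p.1)} := by
      ext x
      simp only [hCdef, Set.mem_iInter, Set.mem_setOf_eq]
      exact ⟨fun h p hp => h hp, fun h a b hab => h (a, b) hab⟩
    rw [h]
    exact MeasurableSet.iInter fun p => MeasurableSet.iInter fun _ =>
      measurableSet_lt (measurable_pi_apply _) (measurable_pi_apply _)
  have hinj : ∀ (x : Fin M → ℝ) (σ : Equiv.Perm (Fin M)), StrictAnti (x ∘ σ) →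
      Function.Injective x := by
    intro x σ h a b hab
    have h2 : σ.symm a = σ.symm b := h.injective (by simpa using hab)
    exact σ.symm.injective h2
  have hmono : ∀ (x : Fin M → ℝ) (σ : Equiv.Perm (Fin M)), StrictAnti (x ∘ σ) →
      Monotone ((fun i => -x i) ∘ σ) := by
    intro x σ h a b hab
    rcases eq_or_lt_of_le hab with rfl | hlt
    · exact le_rfl
    · exact neg_le_neg (h hlt).le
  have hdisj : Set.Pairwise (↑(Finset.univ : Finset (Equiv.Perm (Fin M))))
      (Function.onFun Disjoint fun σ => Sπ ∩ C σ) := by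
    intro σ _ τ _ hστ
    refine Set.disjoint_left.2 fun x hxσ hxτ => hστ ?_
    have hxinj := hinj x σ hxσ.2
    have hcomp := Tuple.unique_monotone (hmono x σ hxσ.2) (hmono x τ hxτ.2)
    have h3 : ∀ i, -x (σ i) = -x (τ i) := fun i => congrFun hcomp i
    exact Equiv.ext fun i => hxinj (neg_injective (h3 i))
  have hcov : ∀ x : Fin M → ℝ, Function.Injective x → ∃ σ : Equiv.Perm (Fin M), x ∈ C σ := by
    intro x hxinj
    refine ⟨Tuple.sort (fun i => -x i), ?_⟩
    have hm : Monotone ((fun i => -x i) ∘ Tuple.sort (fun i => -x i)) := Tuple.monotone_sort _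
    have hanti : Antitone (x ∘ Tuple.sort (fun i => -x i)) := by
      intro c d hcd
      have h4 := hm hcd
      simpa using neg_le_neg h4
    exact hanti.strictAnti_of_injective (hxinj.comp (Tuple.sort _).injective)
  -- decomposition into chambers
  have hsplit : (∫ x in Sπ, G x) = ∑ σ : Equiv.Perm (Fin M), ∫ x in Sπ ∩ C σ, G x := by
    have hUeq : Sπ =ᵐ[volume]
        ⋃ σ ∈ (Finset.univ : Finset (Equiv.Perm (Fin M))), (Sπ ∩ C σ) := by
      refine MeasureTheory.ae_eq_set.2 ⟨measure_mono_null ?_ hN, ?_⟩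
      · intro x hx
        by_contra hxi
        obtain ⟨σ, hσ⟩ := hcov x (not_not.1 hxi)
        exact hx.2 (Set.mem_biUnion (Finset.mem_univ σ) ⟨hx.1, hσ⟩)
      · have : (⋃ σ ∈ (Finset.univ : Finset (Equiv.Perm (Fin M))), (Sπ ∩ C σ)) \ Sπ = ∅ := by
          refine Set.diff_eq_empty.2 ?_
          exact Set.iUnion₂_subset fun σ _ => Set.inter_subset_left
        rw [this, measure_empty]
    rw [setIntegral_congr_set hUeq]
    exact integral_biUnion_finset _ (fun σ _ => hSπm.inter (hCm σ)) hdisj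
      (fun σ _ => hGint.mono_set Set.inter_subset_left)
  -- transfer each chamber to the identity chamber
  have htrans : ∀ σ : Equiv.Perm (Fin M),
      ((∫ x in Sπ ∩ C σ, G x)
        = ∫ y in Sπ ∩ C 1, ((Equiv.Perm.sign σ : ℤ) : ℝ) *
            (Matrix.det (Matrix.of fun i j => Ψ i (y j)) * ∏ i, (Φ (σ i) (y i) * ξ (y i))))
      ∧ IntegrableOn (fun y => ((Equiv.Perm.sign σ : ℤ) : ℝ) *
            (Matrix.det (Matrix.of fun i j => Ψ i (y j)) * ∏ i, (Φ (σ i) (y i) * ξ (y i))))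
          (Sπ ∩ C 1) := by
    intro σ
    set T := MeasurableEquiv.piCongrLeft (fun _ : Fin M => ℝ) σ with hTdef
    have hT : ∀ (y : Fin M → ℝ) (j), T y j = y (σ.symm j) := by
      intro y j
      simp [hTdef, MeasurableEquiv.piCongrLeft, Equiv.piCongrLeft, Equiv.piCongrLeft']
    have hMP : MeasurePreserving T volume volume :=
      volume_measurePreserving_piCongrLeft (fun _ : Fin M => ℝ) σ
    have hGT : ∀ y : Fin M → ℝ, G (T y) = ((Equiv.Perm.sign σ : ℤ) : ℝ) *
        (Matrix.det (Matrix.of fun i j => Ψ i (y j)) * ∏ i, (Φ (σ i) (y i) * ξ (y i))) := by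
      intro y
      have hdet : Matrix.det (Matrix.of fun i j => Ψ i (T y j))
          = ((Equiv.Perm.sign σ : ℤ) : ℝ) * Matrix.det (Matrix.of fun i j => Ψ i (y j)) := by
        have hsub : (Matrix.of fun i j => Ψ i (T y j))
            = (Matrix.of fun i j => Ψ i (y j)).submatrix id σ.symm := by
          ext i j; simp [hT, Matrix.submatrix_apply]
        rw [hsub, Matrix.det_permute', Equiv.Perm.sign_symm]
      have hprod : (∏ m, (Φ m (T y m) * ξ (T y m))) = ∏ i, (Φ (σ i) (y i) * ξ (y i)) := by
        rw [← Equiv.prod_comp σ (fun m => Φ m (T y m) * ξ (T y m))]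
        refine Finset.prod_congr rfl fun i _ => ?_
        simp [hT]
      simp only [hGdef]
      rw [hdet, hprod]; ring
    have himg : T '' (Sπ ∩ C 1) = Sπ ∩ C σ := by
      apply Set.Subset.antisymm
      · rintro - ⟨y, ⟨hyS, hyC⟩, rfl⟩
        constructor
        · intro m _
          rw [hT]; exact hyS (σ.symm m) (Set.mem_univ _)
        · show StrictAnti ((T y) ∘ σ)
          have h5 : (T y) ∘ σ = y := funext fun i => by
            rw [Function.comp_apply, hT, Equiv.symm_apply_apply]
          rw [h5]
          have := hyC
          simpa [hCdef] using this
      · rintro x ⟨hxS, hxC⟩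
        refine ⟨x ∘ σ, ⟨fun m _ => hxS (σ m) (Set.mem_univ _), ?_⟩, ?_⟩
        · show StrictAnti ((x ∘ σ) ∘ (1 : Equiv.Perm (Fin M)))
          simpa [hCdef] using hxC
        · funext j
          rw [hT]
          simp only [Function.comp_apply, Equiv.apply_symm_apply]
    constructor
    · rw [← himg, hMP.setIntegral_image_emb (MeasurableEquiv.measurableEmbedding T) G _]
      exact integral_congr_ae (Filter.Eventually.of_forall fun y => hGT y)
    · have h6 : IntegrableOn (G ∘ T) (Sπ ∩ C 1) :=
        (hMP.integrableOn_image (MeasurableEquiv.measurableEmbedding T)).1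
          (by rw [himg]; exact hGint.mono_set Set.inter_subset_left)
      have h7 : (fun y => ((Equiv.Perm.sign σ : ℤ) : ℝ) *
          (Matrix.det (Matrix.of fun i j => Ψ i (y j)) * ∏ i, (Φ (σ i) (y i) * ξ (y i))))
          = G ∘ T := funext fun y => (hGT y).symm
      rw [h7]; exact h6
  -- the final pointwise identity
  have hfinal : ∀ y : Fin M → ℝ,
      (∑ σ : Equiv.Perm (Fin M), ((Equiv.Perm.sign σ : ℤ) : ℝ) *
        (Matrix.det (Matrix.of fun i j => Ψ i (y j)) * ∏ i, (Φ (σ i) (y i) * ξ (y i))))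
      = Matrix.det (Matrix.of fun i j => Ψ i (y j)) * Matrix.det (Matrix.of fun i j => Φ i (y j))
        * ∏ m, ξ (y m) := by
    intro y
    rw [Matrix.det_apply' (Matrix.of fun i j => Φ i (y j)), Finset.mul_sum, Finset.sum_mul]
    refine Finset.sum_congr rfl fun σ _ => ?_
    simp only [Matrix.of_apply]
    rw [Finset.prod_mul_distrib]
    ring
  -- ae-equality of D and the identity chamber
  have hDae : (Sπ ∩ C 1 : Set (Fin M → ℝ)) =ᵐ[volume]
      {x : Fin M → ℝ | (∀ m, x m ∈ S) ∧ Antitone x} := by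
    refine MeasureTheory.ae_eq_set.2 ⟨?_, measure_mono_null ?_ hN⟩
    · have h8 : (Sπ ∩ C 1 : Set (Fin M → ℝ)) \ {x : Fin M → ℝ | (∀ m, x m ∈ S) ∧ Antitone x} = ∅ := by
        refine Set.diff_eq_empty.2 ?_
        rintro x ⟨hxS, hxC⟩
        refine ⟨fun m => hxS m (Set.mem_univ m), ?_⟩
        have hsa : StrictAnti (x ∘ (1 : Equiv.Perm (Fin M))) := hxC
        have h9 : x ∘ ⇑(1 : Equiv.Perm (Fin M)) = x := rfl
        rw [h9] at hsa
        exact hsa.antitone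
      rw [h8, measure_empty]
    · rintro x ⟨⟨hxS, hxA⟩, hxn⟩
      intro hxinj
      refine hxn ⟨fun m _ => hxS m, ?_⟩
      show StrictAnti (x ∘ (1 : Equiv.Perm (Fin M)))
      have h9 : x ∘ ⇑(1 : Equiv.Perm (Fin M)) = x := rfl
      rw [h9]
      exact hxA.strictAnti_of_injective hxinj
  -- put everything together
  calc (∫ x in {x : Fin M → ℝ | (∀ m, x m ∈ S) ∧ Antitone x},
          Matrix.det (Matrix.of fun i j => Ψ i (x j)) *
          Matrix.det (Matrix.of fun i j => Φ i (x j)) * ∏ m, ξ (x m))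
      = ∫ y in Sπ ∩ C 1,
          Matrix.det (Matrix.of fun i j => Ψ i (y j)) *
          Matrix.det (Matrix.of fun i j => Φ i (y j)) * ∏ m, ξ (y m) :=
        (setIntegral_congr_set hDae).symm
    _ = ∫ y in Sπ ∩ C 1, ∑ σ : Equiv.Perm (Fin M), ((Equiv.Perm.sign σ : ℤ) : ℝ) *
          (Matrix.det (Matrix.of fun i j => Ψ i (y j)) * ∏ i, (Φ (σ i) (y i) * ξ (y i))) :=
        integral_congr_ae (Filter.Eventually.of_forall fun y => (hfinal y).symm)
    _ = ∑ σ : Equiv.Perm (Fin M), ∫ y in Sπ ∩ C 1, ((Equiv.Perm.sign σ : ℤ) : ℝ) *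
          (Matrix.det (Matrix.of fun i j => Ψ i (y j)) * ∏ i, (Φ (σ i) (y i) * ξ (y i))) :=
        integral_finset_sum _ (fun σ _ => (htrans σ).2)
    _ = ∑ σ : Equiv.Perm (Fin M), ∫ x in Sπ ∩ C σ, G x :=
        Finset.sum_congr rfl fun σ _ => ((htrans σ).1).symm
    _ = ∫ x in Sπ, G x := hsplit.symm
    _ = Matrix.det (Matrix.of fun i j : Fin M => ∫ t in S, Ψ i t * Φ j t * ξ t) := stepA.symm

/-- The Chiani–Win–Zanella / Andréief integration identity: for measurable families
`Ψ_i, Φ_i` and a weight `ξ` on the interval `(a, b)` (with extended-real endpoints),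
the integral of `det[Ψ_i(x_j)]·det[Φ_i(x_j)]·∏ ξ(x_m)` over the ordered domain
`b ≥ x_1 ≥ … ≥ x_M ≥ a` equals `det[∫_a^b Ψ_i(x) Φ_j(x) ξ(x) dx]`. -/
theorem andreief_identity
    (M : ℕ) (hM : 1 ≤ M) (a b : EReal) (hab : a < b)
    (Ψ Φ : Fin M → ℝ → ℝ) (ξ : ℝ → ℝ)
    (S : Set ℝ) (hS : S = {x : ℝ | a < (x : EReal) ∧ (x : EReal) < b})
    (hΨ : ∀ i, Measurable (Ψ i)) (hΦ : ∀ i, Measurable (Φ i)) (hξ : Measurable ξ)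
    (hint : ∀ i j, IntegrableOn (fun x => Ψ i x * Φ j x * ξ x) S)
    (D : Set (Fin M → ℝ))
    (hD : D = {x : Fin M → ℝ | (∀ m, x m ∈ S) ∧ Antitone x})
    (hiD : IntegrableOn (fun x : Fin M → ℝ =>
        Matrix.det (Matrix.of fun i j => Ψ i (x j)) *
        Matrix.det (Matrix.of fun i j => Φ i (x j)) * ∏ m, ξ (x m)) D) :
    (∫ x in D,
        Matrix.det (Matrix.of fun i j => Ψ i (x j)) *
        Matrix.det (Matrix.of fun i j => Φ i (x j)) * ∏ m, ξ (x m))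
    = Matrix.det (Matrix.of fun i j : Fin M => ∫ t in S, Ψ i t * Φ j t * ξ t) := by
  subst hD
  have hSm : MeasurableSet S := by
    rw [hS]
    have hc : Measurable (fun x : ℝ => (x : EReal)) := continuous_coe_real_ereal.measurable
    exact (hc measurableSet_Ioi).inter (hc measurableSet_Iio)
  exact andreief_aux M Ψ Φ ξ S hSm hint
end

section
/- Let n_T ≥ n_R ≥ 1 and n_b ≥ 1 be integers, SNR > 0, and set γ = SNR/n_T. Define p : ℂ^{n_R×n_b} → ℝ by p(Y) = ∫_{ℂ^{n_R×n_T}} ∫_{ℂ^{n_T×n_b}} π^{−n_R n_b} exp(−‖Y − √γ·H X‖_F²) · π^{−n_T n_b} exp(−‖X‖_F²) · π^{−n_T n_R} exp(−‖H‖_F²) dX dH. Then for every unitary U ∈ U(n_R), every unitary V ∈ U(n_b), and every Y ∈ ℂ^{n_R×n_b}, one has p(U Y V) = p(Y). In particular, p(Y) depends only on the eigenvalues of Y Y†, and the phases of the entries of Y carry no information about the input. -/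
open MeasureTheory Matrix
open scoped NNReal ENNReal

section AuxLemmas

lemma aux_sum_sq_mulVec {n : ℕ} (A : Matrix (Fin n) (Fin n) ℂ) (hA : star A * A = 1)
    (v : Fin n → ℂ) : ∑ i, ‖(A *ᵥ v) i‖ ^ 2 = ∑ i, ‖v i‖ ^ 2 := by
  have key : star (A *ᵥ v) ⬝ᵥ (A *ᵥ v) = star v ⬝ᵥ v := by
    rw [star_mulVec, dotProduct_mulVec, vecMul_vecMul, ← Matrix.star_eq_conjTranspose, hA,
      vecMul_one]
  have h2 : ∀ w : Fin n → ℂ, (star w ⬝ᵥ w).re = ∑ i, ‖w i‖ ^ 2 := by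
    intro w
    rw [dotProduct, Complex.re_sum]
    refine Finset.sum_congr rfl fun i _ => ?_
    simp [Pi.star_apply, Complex.star_def, RCLike.conj_mul, ← Complex.ofReal_pow]
  rw [← h2, ← h2, key]

lemma aux_Q_leftMul {a b : ℕ} (U : Matrix (Fin a) (Fin a) ℂ) (hU : star U * U = 1)
    (M : Matrix (Fin a) (Fin b) ℂ) :
    ∑ i, ∑ j, ‖(U * M) i j‖ ^ 2 = ∑ i, ∑ j, ‖M i j‖ ^ 2 := by
  have h : ∀ j, ∑ i, ‖(U * M) i j‖ ^ 2 = ∑ i, ‖M i j‖ ^ 2 := by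
    intro j
    have h0 := aux_sum_sq_mulVec U hU (fun k => M k j)
    have h1 : ∀ i, (U *ᵥ fun k => M k j) i = (U * M) i j := by
      intro i
      simp [Matrix.mulVec, dotProduct, Matrix.mul_apply]
    calc ∑ i, ‖(U * M) i j‖ ^ 2
        = ∑ i, ‖(U *ᵥ fun k => M k j) i‖ ^ 2 :=
          Finset.sum_congr rfl fun i _ => by rw [h1]
      _ = ∑ i, ‖M i j‖ ^ 2 := h0
  calc ∑ i, ∑ j, ‖(U * M) i j‖ ^ 2
      = ∑ j, ∑ i, ‖(U * M) i j‖ ^ 2 := Finset.sum_comm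
    _ = ∑ j, ∑ i, ‖M i j‖ ^ 2 := Finset.sum_congr rfl fun j _ => h j
    _ = ∑ i, ∑ j, ‖M i j‖ ^ 2 := Finset.sum_comm

lemma aux_Q_rightMul {a b : ℕ} (V : Matrix (Fin b) (Fin b) ℂ) (hV : V * star V = 1)
    (M : Matrix (Fin a) (Fin b) ℂ) :
    ∑ i, ∑ j, ‖(M * V) i j‖ ^ 2 = ∑ i, ∑ j, ‖M i j‖ ^ 2 := by
  refine Finset.sum_congr rfl fun i _ => ?_
  have hVt : star Vᵀ * Vᵀ = 1 := by
    have h : star Vᵀ * Vᵀ = (V * star V)ᵀ := by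
      rw [Matrix.transpose_mul]; rfl
    rw [h, hV, Matrix.transpose_one]
  have h0 := aux_sum_sq_mulVec Vᵀ hVt (M i)
  have h1 : ∀ j, (Vᵀ *ᵥ M i) j = (M * V) i j := by
    intro j
    simp [Matrix.mulVec, dotProduct, Matrix.mul_apply, Matrix.transpose_apply,
      mul_comm]
  calc ∑ j, ‖(M * V) i j‖ ^ 2
      = ∑ j, ‖(Vᵀ *ᵥ M i) j‖ ^ 2 := Finset.sum_congr rfl fun j _ => by rw [h1]
    _ = ∑ j, ‖M i j‖ ^ 2 := h0

lemma aux_integral_comp {a b : ℕ}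
    (L : (Fin a → Fin b → ℂ) ≃ₗ[ℝ] (Fin a → Fin b → ℂ))
    (hL : ∀ H : Fin a → Fin b → ℂ, ∑ i, ∑ j, ‖L H i j‖ ^ 2 = ∑ i, ∑ j, ‖H i j‖ ^ 2)
    (g : (Fin a → Fin b → ℂ) → ℝ) :
    ∫ H, g (L H) = ∫ H, g H := by
  haveI hHaar : (volume : Measure (Fin a → Fin b → ℂ)).IsAddHaarMeasure :=
    Measure.pi.isAddHaarMeasure _
  have hce : ⇑(L.toContinuousLinearEquiv) = ⇑L := by ext x; rfl
  have hmeas : Measurable (⇑L) := by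
    rw [← hce]; exact L.toContinuousLinearEquiv.continuous.measurable
  have hemb : MeasurableEmbedding (⇑L) := by
    rw [← hce]; exact L.toContinuousLinearEquiv.toHomeomorph.measurableEmbedding
  haveI hμ'h : (volume.map (⇑L)).IsAddHaarMeasure := by
    rw [← hce]; exact L.toContinuousLinearEquiv.isAddHaarMeasure_map volume
  have hsmul := Measure.isAddLeftInvariant_eq_smul (volume.map (⇑L)) volume
  set B : Set (Fin a → Fin b → ℂ) := {H | ∑ i, ∑ j, ‖H i j‖ ^ 2 ≤ 1} with hBdef
  have hQc : Continuous fun H : Fin a → Fin b → ℂ => ∑ i, ∑ j, ‖H i j‖ ^ 2 := by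
    refine continuous_finset_sum _ fun i _ => continuous_finset_sum _ fun j _ => ?_
    exact (((continuous_apply j).comp (continuous_apply i)).norm).pow 2
  have hBm : MeasurableSet B := (isClosed_le hQc continuous_const).measurableSet
  have hopen : IsOpen {H : Fin a → Fin b → ℂ | ∑ i, ∑ j, ‖H i j‖ ^ 2 < 1} :=
    isOpen_lt hQc (continuous_const : Continuous fun _ : Fin a → Fin b → ℂ => (1 : ℝ))
  have h0mem : (0 : Fin a → Fin b → ℂ) ∈
      {H : Fin a → Fin b → ℂ | ∑ i, ∑ j, ‖H i j‖ ^ 2 < 1} := by simp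
  have hsub1 : {H : Fin a → Fin b → ℂ | ∑ i, ∑ j, ‖H i j‖ ^ 2 < 1} ⊆ B := by
    intro x hx
    rw [hBdef]
    have hx' : (∑ i, ∑ j, ‖x i j‖ ^ 2 : ℝ) < 1 := hx
    exact Set.mem_setOf_eq ▸ le_of_lt hx'
  have hpos : 0 < volume B :=
    lt_of_lt_of_le (hopen.measure_pos volume ⟨0, h0mem⟩) (measure_mono hsub1)
  have hfin : volume B < ⊤ := by
    have hsub : B ⊆ Metric.closedBall 0 1 := by
      intro H hH
      have hH' : ∑ i, ∑ j, ‖H i j‖ ^ 2 ≤ 1 := hH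
      rw [Metric.mem_closedBall, dist_zero_right, pi_norm_le_iff_of_nonneg zero_le_one]
      intro i
      rw [pi_norm_le_iff_of_nonneg zero_le_one]
      intro j
      have h1 : ‖H i j‖ ^ 2 ≤ ∑ j', ‖H i j'‖ ^ 2 :=
        Finset.single_le_sum (f := fun j' => ‖H i j'‖ ^ 2)
          (fun j' _ => sq_nonneg _) (Finset.mem_univ j)
      have h2 : ∑ j', ‖H i j'‖ ^ 2 ≤ ∑ i', ∑ j', ‖H i' j'‖ ^ 2 :=
        Finset.single_le_sum (f := fun i' => ∑ j', ‖H i' j'‖ ^ 2)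
          (fun i' _ => Finset.sum_nonneg fun _ _ => sq_nonneg _) (Finset.mem_univ i)
      nlinarith [norm_nonneg (H i j)]
    exact lt_of_le_of_lt (measure_mono hsub)
      (isCompact_closedBall (0 : Fin a → Fin b → ℂ) 1).measure_lt_top
  have hpre : ⇑L ⁻¹' B = B := by
    ext H
    simp only [Set.mem_preimage, hBdef, Set.mem_setOf_eq, hL]
  have hμ'B : (volume.map (⇑L)) B = volume B := by
    rw [Measure.map_apply hmeas hBm, hpre]
  have hc : (((volume.map (⇑L)).addHaarScalarFactor volume : ℝ≥0) : ℝ≥0∞) * volume B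
      = volume B := by
    have h := hμ'B
    rw [hsmul] at h
    rw [Measure.smul_apply, ENNReal.smul_def, smul_eq_mul] at h
    exact h
  have hc1 : (volume.map (⇑L)).addHaarScalarFactor volume = 1 := by
    have hx0 : volume B ≠ 0 := hpos.ne'
    have hxt : volume B ≠ ⊤ := hfin.ne
    have h3 : (((volume.map (⇑L)).addHaarScalarFactor volume : ℝ≥0) : ℝ≥0∞) = 1 := by
      calc (((volume.map (⇑L)).addHaarScalarFactor volume : ℝ≥0) : ℝ≥0∞)
          = (((volume.map (⇑L)).addHaarScalarFactor volume : ℝ≥0) : ℝ≥0∞) *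
              (volume B * (volume B)⁻¹) := by
            rw [ENNReal.mul_inv_cancel hx0 hxt, mul_one]
        _ = ((((volume.map (⇑L)).addHaarScalarFactor volume : ℝ≥0) : ℝ≥0∞) * volume B) *
              (volume B)⁻¹ := by rw [mul_assoc]
        _ = volume B * (volume B)⁻¹ := by rw [hc]
        _ = 1 := ENNReal.mul_inv_cancel hx0 hxt
    exact_mod_cast h3
  have hmp : MeasurePreserving (⇑L) volume volume :=
    ⟨hmeas, by rw [hsmul, hc1, one_smul]⟩
  exact hmp.integral_comp hemb g

noncomputable def auxLeftMulLE {a b : ℕ} (U : Matrix (Fin a) (Fin a) ℂ)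
    (h1 : star U * U = 1) (h2 : U * star U = 1) :
    (Fin a → Fin b → ℂ) ≃ₗ[ℝ] (Fin a → Fin b → ℂ) where
  toFun H := of.symm (U * of H)
  invFun H := of.symm (star U * of H)
  left_inv H := by
    show of.symm (star U * (U * of H)) = H
    rw [← Matrix.mul_assoc, h1, Matrix.one_mul]
    rfl
  right_inv H := by
    show of.symm (U * (star U * of H)) = H
    rw [← Matrix.mul_assoc, h2, Matrix.one_mul]
    rfl
  map_add' H K := by
    show of.symm (U * (of H + of K)) = _
    rw [Matrix.mul_add]
    rfl
  map_smul' r H := by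
    show of.symm (U * (r • of H)) = _
    rw [Matrix.mul_smul]
    rfl

noncomputable def auxRightMulLE {a b : ℕ} (V : Matrix (Fin b) (Fin b) ℂ)
    (h1 : V * star V = 1) (h2 : star V * V = 1) :
    (Fin a → Fin b → ℂ) ≃ₗ[ℝ] (Fin a → Fin b → ℂ) where
  toFun X := of.symm (of X * V)
  invFun X := of.symm (of X * star V)
  left_inv X := by
    show of.symm (of X * V * star V) = X
    rw [Matrix.mul_assoc, h1, Matrix.mul_one]
    rfl
  right_inv X := by
    show of.symm (of X * star V * V) = X
    rw [Matrix.mul_assoc, h2, Matrix.mul_one]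
    rfl
  map_add' H K := by
    show of.symm ((of H + of K) * V) = _
    rw [Matrix.add_mul]
    rfl
  map_smul' r H := by
    show of.symm ((r • of H) * V) = _
    rw [Matrix.smul_mul]
    rfl

end AuxLemmas

set_option maxHeartbeats 2000000 in
/-- Unitary invariance of the unconditional output density of the block Rayleigh-faded
channel with IID complex Gaussian input: `p(UYV) = p(Y)` for all unitary `U, V`; hence
`p(Y)` depends only on the eigenvalues of `Y Y†` and the phases of the entries of `Y`
carry no information about the input. -/
theorem output_density_unitary_invariant
    (nT nR nb : ℕ) (hR : 1 ≤ nR) (hTR : nR ≤ nT) (hb : 1 ≤ nb)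
    (SNR : ℝ) (hSNR : 0 < SNR)
    (p : Matrix (Fin nR) (Fin nb) ℂ → ℝ)
    (hp : ∀ Y, p Y = ∫ H : Fin nR → Fin nT → ℂ, ∫ X : Fin nT → Fin nb → ℂ,
        (Real.pi ^ (nR * nb))⁻¹ *
          Real.exp (-∑ i, ∑ j,
            ‖(Y - (Real.sqrt (SNR / nT) : ℂ) • (Matrix.of H * Matrix.of X)) i j‖ ^ 2) *
        ((Real.pi ^ (nT * nb))⁻¹ * Real.exp (-∑ i, ∑ j, ‖X i j‖ ^ 2)) *
        ((Real.pi ^ (nT * nR))⁻¹ * Real.exp (-∑ i, ∑ j, ‖H i j‖ ^ 2))) :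
    ∀ (U : Matrix.unitaryGroup (Fin nR) ℂ) (V : Matrix.unitaryGroup (Fin nb) ℂ)
      (Y : Matrix (Fin nR) (Fin nb) ℂ),
      p ((U : Matrix (Fin nR) (Fin nR) ℂ) * Y * (V : Matrix (Fin nb) (Fin nb) ℂ)) = p Y := by
  intro U V Y
  have hU1 : star (U : Matrix (Fin nR) (Fin nR) ℂ) * (U : Matrix (Fin nR) (Fin nR) ℂ) = 1 :=
    U.2.1
  have hU2 : (U : Matrix (Fin nR) (Fin nR) ℂ) * star (U : Matrix (Fin nR) (Fin nR) ℂ) = 1 :=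
    U.2.2
  have hV1 : star (V : Matrix (Fin nb) (Fin nb) ℂ) * (V : Matrix (Fin nb) (Fin nb) ℂ) = 1 :=
    V.2.1
  have hV2 : (V : Matrix (Fin nb) (Fin nb) ℂ) * star (V : Matrix (Fin nb) (Fin nb) ℂ) = 1 :=
    V.2.2
  have hU1' : star (star (U : Matrix (Fin nR) (Fin nR) ℂ)) *
      star (U : Matrix (Fin nR) (Fin nR) ℂ) = 1 := by rw [star_star]; exact hU2
  have hU2' : star (U : Matrix (Fin nR) (Fin nR) ℂ) *
      star (star (U : Matrix (Fin nR) (Fin nR) ℂ)) = 1 := by rw [star_star]; exact hU1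
  have hV1' : star (V : Matrix (Fin nb) (Fin nb) ℂ) *
      star (star (V : Matrix (Fin nb) (Fin nb) ℂ)) = 1 := by rw [star_star]; exact hV1
  have hV2' : star (star (V : Matrix (Fin nb) (Fin nb) ℂ)) *
      star (V : Matrix (Fin nb) (Fin nb) ℂ) = 1 := by rw [star_star]; exact hV2
  rw [hp, hp]
  set c : ℂ := (Real.sqrt (SNR / nT) : ℂ) with hc
  -- the two substitution linear equivalences
  refine Eq.trans ?_ (aux_integral_comp
    (auxLeftMulLE (b := nT) (star (U : Matrix (Fin nR) (Fin nR) ℂ)) hU1' hU2')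
    (fun H => aux_Q_leftMul (star (U : Matrix (Fin nR) (Fin nR) ℂ)) hU1' (of H)) _)
  congr 1
  funext H
  refine Eq.trans ?_ (aux_integral_comp
    (auxRightMulLE (a := nT) (star (V : Matrix (Fin nb) (Fin nb) ℂ)) hV1' hV2')
    (fun X => aux_Q_rightMul (star (V : Matrix (Fin nb) (Fin nb) ℂ)) hV1' (of X)) _)
  congr 1
  funext X
  show _ = (Real.pi ^ (nR * nb))⁻¹ *
          Real.exp (-∑ i, ∑ j,
            ‖(Y - c • (Matrix.of ((auxLeftMulLE (b := nT)
                (star (U : Matrix (Fin nR) (Fin nR) ℂ)) hU1' hU2') H) *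
              Matrix.of ((auxRightMulLE (a := nT)
                (star (V : Matrix (Fin nb) (Fin nb) ℂ)) hV1' hV2') X))) i j‖ ^ 2) *
        ((Real.pi ^ (nT * nb))⁻¹ * Real.exp (-∑ i, ∑ j,
            ‖((auxRightMulLE (a := nT)
                (star (V : Matrix (Fin nb) (Fin nb) ℂ)) hV1' hV2') X) i j‖ ^ 2)) *
        ((Real.pi ^ (nT * nR))⁻¹ * Real.exp (-∑ i, ∑ j,
            ‖((auxLeftMulLE (b := nT)
                (star (U : Matrix (Fin nR) (Fin nR) ℂ)) hU1' hU2') H) i j‖ ^ 2))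
  have eH : ∑ i, ∑ j, ‖((auxLeftMulLE (b := nT)
      (star (U : Matrix (Fin nR) (Fin nR) ℂ)) hU1' hU2') H) i j‖ ^ 2
      = ∑ i, ∑ j, ‖H i j‖ ^ 2 :=
    aux_Q_leftMul (star (U : Matrix (Fin nR) (Fin nR) ℂ)) hU1' (of H)
  have eX : ∑ i, ∑ j, ‖((auxRightMulLE (a := nT)
      (star (V : Matrix (Fin nb) (Fin nb) ℂ)) hV1' hV2') X) i j‖ ^ 2
      = ∑ i, ∑ j, ‖X i j‖ ^ 2 :=
    aux_Q_rightMul (star (V : Matrix (Fin nb) (Fin nb) ℂ)) hV1' (of X)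
  have hZ : Y - c • (Matrix.of ((auxLeftMulLE (b := nT)
        (star (U : Matrix (Fin nR) (Fin nR) ℂ)) hU1' hU2') H) *
      Matrix.of ((auxRightMulLE (a := nT)
        (star (V : Matrix (Fin nb) (Fin nb) ℂ)) hV1' hV2') X))
      = star (U : Matrix (Fin nR) (Fin nR) ℂ) *
        (((U : Matrix (Fin nR) (Fin nR) ℂ) * Y * (V : Matrix (Fin nb) (Fin nb) ℂ) -
          c • (of H * of X)) * star (V : Matrix (Fin nb) (Fin nb) ℂ)) := by
    show Y - c • ((star (U : Matrix (Fin nR) (Fin nR) ℂ) * of H) *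
        (of X * star (V : Matrix (Fin nb) (Fin nb) ℂ))) = _
    rw [Matrix.sub_mul, Matrix.mul_sub, Matrix.smul_mul, Matrix.mul_smul]
    congr 1
    · rw [Matrix.mul_assoc ((U : Matrix (Fin nR) (Fin nR) ℂ) * Y)
        (V : Matrix (Fin nb) (Fin nb) ℂ) (star (V : Matrix (Fin nb) (Fin nb) ℂ)), hV2,
        Matrix.mul_one, ← Matrix.mul_assoc, hU1, Matrix.one_mul]
    · congr 1
      rw [Matrix.mul_assoc (star (U : Matrix (Fin nR) (Fin nR) ℂ)) (of H)
        (of X * star (V : Matrix (Fin nb) (Fin nb) ℂ)),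
        Matrix.mul_assoc (of H) (of X) (star (V : Matrix (Fin nb) (Fin nb) ℂ))]
  have eM : ∑ i, ∑ j, ‖(Y - c • (Matrix.of ((auxLeftMulLE (b := nT)
        (star (U : Matrix (Fin nR) (Fin nR) ℂ)) hU1' hU2') H) *
      Matrix.of ((auxRightMulLE (a := nT)
        (star (V : Matrix (Fin nb) (Fin nb) ℂ)) hV1' hV2') X))) i j‖ ^ 2
      = ∑ i, ∑ j, ‖(((U : Matrix (Fin nR) (Fin nR) ℂ) * Y *
          (V : Matrix (Fin nb) (Fin nb) ℂ)) - c • (of H * of X)) i j‖ ^ 2 := by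
    rw [hZ, aux_Q_leftMul (star (U : Matrix (Fin nR) (Fin nR) ℂ)) hU1',
      aux_Q_rightMul (star (V : Matrix (Fin nb) (Fin nb) ℂ)) hV1']
  rw [eM, eX, eH]
end

section
/- Let n_b ≥ 1 be an integer and SNR > 0. For every y ∈ ℂ^{n_b}, ∫_{ℂ} ∫_{ℂ^{n_b}} π^{−n_b} exp( −‖y − √SNR·h x‖² ) · π^{−n_b} exp( −‖x‖² ) · π^{−1} exp( −|h|² ) dx dh = ( e^{−‖y‖²} / π^{n_b} ) · ∫_0^∞ exp( ‖y‖²·SNR·z/(SNR·z + 1) − z ) · (SNR·z + 1)^{−n_b} dz. That is, the unconditional output density of the scalar (n_T = n_R = 1) block Rayleigh-faded channel of coherence length n_b with IID complex Gaussian input admits this one-dimensional integral representation. -/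
open MeasureTheory

lemma gauss_c {s : ℝ} (hs : 0 < s) : ∫ x : ℂ, Real.exp (-(s * ‖x‖ ^ 2)) = Real.pi / s := by
  have h := Complex.integral_exp_neg_mul_rpow (p := 2) one_le_two hs
  simp_rw [neg_mul] at h ⊢
  rw [show ((2:ℝ)) = ((2:ℕ):ℝ) by norm_num] at h
  simp_rw [Real.rpow_natCast] at h
  rw [h]
  norm_num
  rw [Real.rpow_neg_one]
  ring

lemma gauss_shift {s : ℝ} (hs : 0 < s) (w : ℂ) :
    ∫ x : ℂ, Real.exp (-(s * ‖x - w‖ ^ 2)) = Real.pi / s := by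
  rw [← gauss_c hs]
  exact integral_sub_right_eq_self (fun x : ℂ => Real.exp (-(s * ‖x‖ ^ 2))) w

lemma complete_sq (a c x : ℂ) :
    ‖c - a * x‖ ^ 2 + ‖x‖ ^ 2 =
      (1 + ‖a‖ ^ 2) * ‖x - (starRingEnd ℂ a) * c / ((1 + ‖a‖ ^ 2 : ℝ) : ℂ)‖ ^ 2
        + ‖c‖ ^ 2 / (1 + ‖a‖ ^ 2) := by
  have hs : (0:ℝ) < 1 + ‖a‖ ^ 2 := by positivity
  have hs' : ((1 + ‖a‖ ^ 2 : ℝ) : ℂ) ≠ 0 := by exact_mod_cast hs.ne'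
  have hxw : x - (starRingEnd ℂ a) * c / ((1 + ‖a‖ ^ 2 : ℝ) : ℂ)
      = (((1 + ‖a‖ ^ 2 : ℝ) : ℂ) * x - (starRingEnd ℂ a) * c) / ((1 + ‖a‖ ^ 2 : ℝ) : ℂ) := by
    rw [eq_div_iff hs', sub_mul, div_mul_cancel₀ _ hs', mul_comm]
  rw [hxw]
  simp only [Complex.sq_norm, Complex.normSq_div, Complex.normSq_ofReal]
  have hs2 : (0:ℝ) < 1 + Complex.normSq a := by
    have := Complex.normSq_nonneg a; linarith
  field_simp [hs2.ne']
  simp only [Complex.normSq_apply, Complex.sub_re, Complex.sub_im, Complex.mul_re,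
    Complex.mul_im, Complex.ofReal_re, Complex.ofReal_im, Complex.conj_re, Complex.conj_im,
    Complex.add_re, Complex.add_im, Complex.one_re, Complex.one_im]
  ring

lemma gauss_one (a c : ℂ) :
    ∫ x : ℂ, Real.exp (-(‖c - a * x‖ ^ 2 + ‖x‖ ^ 2)) =
      Real.pi / (1 + ‖a‖ ^ 2) * Real.exp (-(‖c‖ ^ 2 / (1 + ‖a‖ ^ 2))) := by
  have hs : (0:ℝ) < 1 + ‖a‖ ^ 2 := by positivity
  simp_rw [complete_sq a c, neg_add, Real.exp_add]
  rw [integral_mul_const, gauss_shift hs]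

lemma radial (g : ℝ → ℝ) :
    ∫ h : ℂ, g (‖h‖ ^ 2) = Real.pi * ∫ z in Set.Ioi (0:ℝ), g z := by
  have h1 : ∫ h : ℂ, g (‖h‖ ^ 2)
      = ∫ p in polarCoord.target, p.1 • g (|p.1| ^ 2) := by
    rw [← Complex.integral_comp_polarCoord_symm (fun z => g (‖z‖ ^ 2))]
    simp_rw [Complex.norm_polarCoord_symm]
  rw [h1, polarCoord_target]
  have h2 : ∫ p in Set.Ioi (0:ℝ) ×ˢ Set.Ioo (-Real.pi) Real.pi, p.1 • g (|p.1| ^ 2)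
      = (∫ r in Set.Ioi (0:ℝ), r * g (|r| ^ 2)) * ∫ _ in Set.Ioo (-Real.pi) Real.pi, (1:ℝ) := by
    rw [← setIntegral_prod_mul, Measure.volume_eq_prod]
    simp_rw [mul_one]
    rfl
  rw [h2]
  rw [integral_const, measureReal_def, Measure.restrict_apply MeasurableSet.univ, Set.univ_inter, Real.volume_Ioo,
    sub_neg_eq_add, ← two_mul, ENNReal.toReal_ofReal (by positivity : (0:ℝ) ≤ 2 * Real.pi),
    smul_eq_mul, mul_one]
  have h4 : ∫ r in Set.Ioi (0:ℝ), (2 * r ^ ((2:ℝ) - 1)) • g (r ^ (2:ℝ))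
      = ∫ r in Set.Ioi (0:ℝ), 2 * (r * g (|r| ^ 2)) := by
    refine setIntegral_congr_fun measurableSet_Ioi (fun r hr => ?_)
    have hr' : (0:ℝ) < r := hr
    rw [smul_eq_mul, show ((2:ℝ) - 1) = 1 by norm_num, Real.rpow_one,
      show r ^ (2:ℝ) = r ^ 2 by rw [← Real.rpow_natCast r 2]; norm_num, sq_abs]
    ring
  have h5 := integral_comp_rpow_Ioi_of_pos (g := g) (p := 2) two_pos
  rw [h4, integral_const_mul] at h5
  rw [← h5]
  ring

/-- Specialization of Proposition 2 to a single transmit and a single receive antenna: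
the unconditional output density of the scalar block Rayleigh-faded channel of coherence
length `n_b` with IID complex Gaussian input admits a one-dimensional integral
representation. -/
theorem scalar_output_density
    (nb : ℕ) (hb : 1 ≤ nb) (SNR : ℝ) (hSNR : 0 < SNR) (y : Fin nb → ℂ) :
    (∫ h : ℂ, ∫ x : Fin nb → ℂ,
        (Real.pi ^ nb)⁻¹ * Real.exp (-∑ i, ‖y i - (Real.sqrt SNR : ℂ) * h * x i‖ ^ 2) *
        ((Real.pi ^ nb)⁻¹ * Real.exp (-∑ i, ‖x i‖ ^ 2)) *
        (Real.pi⁻¹ * Real.exp (-‖h‖ ^ 2)))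
    = (Real.exp (-∑ i, ‖y i‖ ^ 2) / Real.pi ^ nb) *
        ∫ z in Set.Ioi (0 : ℝ),
          Real.exp ((∑ i, ‖y i‖ ^ 2) * (SNR * z) / (SNR * z + 1) - z) *
            ((SNR * z + 1) ^ nb)⁻¹ := by
  set Y : ℝ := ∑ i, ‖y i‖ ^ 2 with hY
  have inner : ∀ h : ℂ,
      (∫ x : Fin nb → ℂ,
        (Real.pi ^ nb)⁻¹ * Real.exp (-∑ i, ‖y i - (Real.sqrt SNR : ℂ) * h * x i‖ ^ 2) *
        ((Real.pi ^ nb)⁻¹ * Real.exp (-∑ i, ‖x i‖ ^ 2)) *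
        (Real.pi⁻¹ * Real.exp (-‖h‖ ^ 2)))
      = (Real.pi ^ nb)⁻¹ * (Real.pi⁻¹ *
          (Real.exp (-‖h‖ ^ 2) * ((1 + SNR * ‖h‖ ^ 2) ^ nb)⁻¹ *
            Real.exp (-(Y / (1 + SNR * ‖h‖ ^ 2))))) := by
    intro h
    set a : ℂ := (Real.sqrt SNR : ℂ) * h with ha
    have hna : ‖a‖ ^ 2 = SNR * ‖h‖ ^ 2 := by
      rw [ha, norm_mul, mul_pow, Complex.norm_real, Real.norm_eq_abs, sq_abs, Real.sq_sqrt hSNR.le]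
    have hs : (0:ℝ) < 1 + ‖a‖ ^ 2 := by positivity
    have step : ∀ x : Fin nb → ℂ,
        (Real.pi ^ nb)⁻¹ * Real.exp (-∑ i, ‖y i - a * x i‖ ^ 2) *
          ((Real.pi ^ nb)⁻¹ * Real.exp (-∑ i, ‖x i‖ ^ 2)) *
          (Real.pi⁻¹ * Real.exp (-‖h‖ ^ 2))
        = ((Real.pi ^ nb)⁻¹ * (Real.pi ^ nb)⁻¹ * (Real.pi⁻¹ * Real.exp (-‖h‖ ^ 2))) *
            ∏ i, Real.exp (-(‖y i - a * x i‖ ^ 2 + ‖x i‖ ^ 2)) := by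
      intro x
      rw [← Real.exp_sum]
      have hsum : ∑ i, (-(‖y i - a * x i‖ ^ 2 + ‖x i‖ ^ 2))
          = (-∑ i, ‖y i - a * x i‖ ^ 2) + (-∑ i, ‖x i‖ ^ 2) := by
        simp only [neg_add, Finset.sum_add_distrib, Finset.sum_neg_distrib]
      rw [hsum, Real.exp_add]
      ring
    simp_rw [step]
    rw [integral_const_mul, MeasureTheory.integral_fintype_prod_volume_eq_prod
      (fun i x => Real.exp (-(‖y i - a * x‖ ^ 2 + ‖x‖ ^ 2)))]
    simp_rw [gauss_one a]
    rw [Finset.prod_mul_distrib, Finset.prod_const, Finset.card_univ, Fintype.card_fin,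
      ← Real.exp_sum]
    have hsum2 : ∑ i, (-(‖y i‖ ^ 2 / (1 + ‖a‖ ^ 2))) = -(Y / (1 + ‖a‖ ^ 2)) := by
      rw [hY, Finset.sum_neg_distrib, Finset.sum_div]
    rw [hsum2, hna, div_pow]
    have hp : Real.pi ≠ 0 := Real.pi_ne_zero
    have hsn : ((1 + SNR * ‖h‖ ^ 2) ^ nb : ℝ) ≠ 0 := by positivity
    field_simp
  simp only [inner]
  rw [integral_const_mul, integral_const_mul]
  have hr := radial (fun z => Real.exp (-z) * ((1 + SNR * z) ^ nb)⁻¹ *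
    Real.exp (-(Y / (1 + SNR * z))))
  rw [hr]
  have key : ∀ z ∈ Set.Ioi (0:ℝ),
      Real.exp (-z) * ((1 + SNR * z) ^ nb)⁻¹ * Real.exp (-(Y / (1 + SNR * z)))
      = Real.exp (-Y) * (Real.exp (Y * (SNR * z) / (SNR * z + 1) - z) *
          ((SNR * z + 1) ^ nb)⁻¹) := by
    intro z hz
    have hz0 : (0:ℝ) < z := hz
    have hz1 : (0:ℝ) < SNR * z + 1 := by positivity
    have hcomm : (1 + SNR * z) = SNR * z + 1 := add_comm _ _
    rw [hcomm]
    have h2 : -z + -(Y / (SNR * z + 1)) = -Y + (Y * (SNR * z) / (SNR * z + 1) - z) := by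
      field_simp
      ring
    calc Real.exp (-z) * ((SNR * z + 1) ^ nb)⁻¹ * Real.exp (-(Y / (SNR * z + 1)))
        = Real.exp (-z + -(Y / (SNR * z + 1))) * ((SNR * z + 1) ^ nb)⁻¹ := by
          rw [Real.exp_add]; ring
      _ = Real.exp (-Y + (Y * (SNR * z) / (SNR * z + 1) - z)) * ((SNR * z + 1) ^ nb)⁻¹ := by
          rw [h2]
      _ = Real.exp (-Y) * (Real.exp (Y * (SNR * z) / (SNR * z + 1) - z) *
          ((SNR * z + 1) ^ nb)⁻¹) := by
          rw [Real.exp_add]; ring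
  rw [setIntegral_congr_fun measurableSet_Ioi key, integral_const_mul]
  have hp : Real.pi ≠ 0 := Real.pi_ne_zero
  field_simp
end
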